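/- Let σ > 0, v > 0, ε, m ∈ ℝ and p > 0, and let f be a random variable distributed according to the Gaussian measure with mean m and variance v². Then for every q ∈ ℝ, P(p·Φ((ε − f)/σ) ≤ p·Φ((v·q − m + ε)/σ)) = Φ(q). In particular, taking q = 0, the value p·Φ((ε − m)/σ) is a median of the random variable p·Φ((ε − f)/σ). -/

import Mathlib

open MeasureTheory Real

/-- Standard normal cumulative distribution function. -/
noncomputable def Phi (x : ℝ) : ℝ :=
  ∫ t in Set.Iic x, Real.exp (-t ^ 2 / 2) / Real.sqrt (2 * Real.pi)

/-- Gaussian probability density with mean `m` and standard deviation `v`. -/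
noncomputable def gaussPdf (m v x : ℝ) : ℝ :=
  Real.exp (-(x - m) ^ 2 / (2 * v ^ 2)) / Real.sqrt (2 * Real.pi * v ^ 2)

/-- Owen's t-function. -/
noncomputable def OwenT (h a : ℝ) : ℝ :=
  (1 / (2 * Real.pi)) * ∫ x in (0:ℝ)..a, Real.exp (-h ^ 2 * (1 + x ^ 2) / 2) / (1 + x ^ 2)

open ProbabilityTheory

noncomputable def phiAux (t : ℝ) : ℝ := Real.exp (-t ^ 2 / 2) / Real.sqrt (2 * Real.pi)

lemma phiAux_pos (t : ℝ) : 0 < phiAux t := by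
  unfold phiAux
  have : 0 < Real.sqrt (2 * Real.pi) := Real.sqrt_pos.2 (by positivity)
  positivity

lemma integrable_phiAux : Integrable phiAux := by
  have h : Integrable fun t : ℝ => Real.exp (-(1/2 : ℝ) * t ^ 2) :=
    integrable_exp_neg_mul_sq (by norm_num)
  have := h.div_const (Real.sqrt (2 * Real.pi))
  refine this.congr (ae_of_all _ fun t => ?_)
  unfold phiAux
  ring_nf

lemma integral_phiAux : ∫ t, phiAux t = 1 := by
  unfold phiAux
  simp_rw [div_eq_mul_inv, integral_mul_const]
  simp_rw [show ∀ a : ℝ, -a ^ 2 * 2⁻¹ = -(1/2 : ℝ) * a ^ 2 from fun a => by ring]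
  rw [integral_gaussian]
  rw [show π / (1/2 : ℝ) = 2 * π by ring]
  exact mul_inv_cancel₀ (by positivity)

lemma Phi_eq (x : ℝ) : Phi x = ∫ t in Set.Iic x, phiAux t := rfl

lemma Phi_strictMono : StrictMono Phi := by
  intro x y hxy
  rw [Phi_eq, Phi_eq]
  have hIic : Set.Iic y = Set.Iic x ∪ Set.Ioc x y := (Set.Iic_union_Ioc_eq_Iic hxy.le).symm
  have hdisj : Disjoint (Set.Iic x) (Set.Ioc x y) :=
    (Set.Iic_disjoint_Ioi le_rfl).mono_right Set.Ioc_subset_Ioi_self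
  rw [hIic, setIntegral_union hdisj measurableSet_Ioc
    integrable_phiAux.integrableOn integrable_phiAux.integrableOn]
  have hpos : 0 < ∫ t in Set.Ioc x y, phiAux t := by
    rw [setIntegral_pos_iff_support_of_nonneg_ae
      (ae_of_all _ fun t => (phiAux_pos t).le) integrable_phiAux.integrableOn]
    have : Function.support phiAux = Set.univ := by
      ext t; simp [Function.mem_support, (phiAux_pos t).ne']
    rw [this, Set.univ_inter, Real.volume_Ioc]
    simp [hxy]
  linarith

lemma Phi_le_Phi_iff {x y : ℝ} : Phi x ≤ Phi y ↔ x ≤ y := by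
  constructor
  · intro h
    by_contra hxy
    exact absurd h (not_le.2 (Phi_strictMono (not_le.1 hxy)))
  · exact fun h => Phi_strictMono.monotone h

lemma Phi_zero : Phi 0 = 1 / 2 := by
  have heven : ∀ t : ℝ, phiAux (-t) = phiAux t := by
    intro t; unfold phiAux; rw [neg_pow]; ring_nf
  have h1 : ∫ t in Set.Iic (0:ℝ), phiAux t = ∫ t in Set.Ioi (0:ℝ), phiAux t := by
    have := integral_comp_neg_Iic (0:ℝ) phiAux
    rw [neg_zero] at this
    rw [← this]
    exact setIntegral_congr_fun measurableSet_Iic fun t _ => (heven t).symm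
  have h2 : (∫ t in Set.Iic (0:ℝ), phiAux t) + ∫ t in Set.Ioi (0:ℝ), phiAux t = 1 := by
    rw [← integral_phiAux]
    rw [← setIntegral_union (Set.Iic_disjoint_Ioi le_rfl) measurableSet_Ioi
      integrable_phiAux.integrableOn integrable_phiAux.integrableOn, Set.Iic_union_Ioi,
      setIntegral_univ]
  rw [Phi_eq]
  linarith [h1, h2]

lemma setIntegral_comp_mul_left_Iic (g : ℝ → ℝ) (c : ℝ) {b : ℝ} (hb : 0 < b) :
    ∫ x in Set.Iic c, g (b * x) = b⁻¹ • ∫ x in Set.Iic (b * c), g x := by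
  rw [← integral_indicator measurableSet_Iic, ← integral_indicator measurableSet_Iic,
    ← abs_of_pos (inv_pos.mpr hb), ← MeasureTheory.Measure.integral_comp_mul_left]
  congr 1
  ext1 x
  rw [← Set.indicator_comp_right]
  congr 1
  ext y
  simp only [Set.mem_preimage, Set.mem_Iic]
  exact (mul_le_mul_iff_right₀ hb).symm

lemma setIntegral_comp_add_right_Iic (g : ℝ → ℝ) (c a : ℝ) :
    ∫ x in Set.Iic c, g (x + a) = ∫ x in Set.Iic (c + a), g x := by
  rw [← integral_indicator measurableSet_Iic, ← integral_indicator measurableSet_Iic]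
  rw [← integral_add_right_eq_self (fun x => (Set.Iic (c + a)).indicator g x) a]
  congr 1
  ext1 x
  rw [← Set.indicator_comp_right (fun x : ℝ => x + a)]
  congr 1
  rw [Set.preimage_add_const_Iic, add_sub_cancel_right]

lemma gauss_Ici (m v q : ℝ) (hv : 0 < v) :
    ((gaussianReal m (v ^ 2).toNNReal) (Set.Ici (m - v * q))).toReal = Phi q := by
  have hV : (v ^ 2).toNNReal ≠ 0 := by
    simp [Real.toNNReal_eq_zero, not_le, pow_pos hv, hv.ne']
  have hVcoe : ((v ^ 2).toNNReal : ℝ) = v ^ 2 := Real.coe_toNNReal _ (sq_nonneg v)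
  set V := (v ^ 2).toNNReal with hVdef
  rw [gaussianReal_apply_eq_integral m hV,
    ENNReal.toReal_ofReal (integral_nonneg fun x => gaussianPDFReal_nonneg m V x)]
  set F : ℝ → ℝ := fun x => gaussianPDFReal m V (-x) with hF
  have key : ∀ t : ℝ, v * F (v * t - m) = phiAux t := by
    intro t
    rw [hF]
    simp only
    rw [gaussianPDFReal, phiAux]
    have h1 : -(v * t - m) - m = -(v * t) := by ring
    rw [h1]
    have h2 : √(2 * π * V) = v * √(2 * π) := by
      rw [hVcoe, show 2 * π * v ^ 2 = v ^ 2 * (2 * π) by ring, Real.sqrt_mul (sq_nonneg v),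
        Real.sqrt_sq hv.le]
    have h3 : -(-(v * t)) ^ 2 / (2 * (V:ℝ)) = -t ^ 2 / 2 := by
      rw [hVcoe]; field_simp
    rw [h2, h3, mul_inv, div_eq_mul_inv]
    field_simp
  calc (∫ x in Set.Ici (m - v * q), gaussianPDFReal m V x)
      = ∫ x in Set.Ioi (m - v * q), gaussianPDFReal m V x :=
        MeasureTheory.integral_Ici_eq_integral_Ioi
    _ = ∫ x in Set.Iic (v * q - m), F x := by
        rw [show m - v * q = -(v * q - m) by ring, ← integral_comp_neg_Iic]
    _ = ∫ x in Set.Iic (v * q + -m), F x := by norm_num [sub_eq_add_neg]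
    _ = ∫ x in Set.Iic (v * q), F (x + -m) := (setIntegral_comp_add_right_Iic F (v * q) (-m)).symm
    _ = v • ∫ t in Set.Iic q, F (v * t + -m) := by
        rw [setIntegral_comp_mul_left_Iic (fun y => F (y + -m)) q hv, smul_smul,
          mul_inv_cancel₀ hv.ne', one_smul]
    _ = Phi q := by
        rw [← integral_smul, Phi_eq]
        refine setIntegral_congr_fun measurableSet_Iic fun t _ => ?_
        rw [smul_eq_mul, show v * t + -m = v * t - m by ring, key t]

theorem stmt_12 (σ v ε m p : ℝ) (hσ : 0 < σ) (hv : 0 < v) (hp : 0 < p) :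
    (∀ q : ℝ,
      ((gaussianReal m (v ^ 2).toNNReal)
          {f : ℝ | p * Phi ((ε - f) / σ) ≤ p * Phi ((v * q - m + ε) / σ)}).toReal
        = Phi q) ∧
    (1 / 2 ≤ ((gaussianReal m (v ^ 2).toNNReal)
        {f : ℝ | p * Phi ((ε - f) / σ) ≤ p * Phi ((ε - m) / σ)}).toReal ∧
      1 / 2 ≤ ((gaussianReal m (v ^ 2).toNNReal)
        {f : ℝ | p * Phi ((ε - m) / σ) ≤ p * Phi ((ε - f) / σ)}).toReal) := by
  have hcmp : ∀ a b : ℝ, p * Phi (a / σ) ≤ p * Phi (b / σ) ↔ a ≤ b := by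
    intro a b
    rw [mul_le_mul_iff_right₀ hp, Phi_le_Phi_iff, div_le_div_iff_of_pos_right hσ]
  have h1 : ∀ q : ℝ,
      ((gaussianReal m (v ^ 2).toNNReal)
          {f : ℝ | p * Phi ((ε - f) / σ) ≤ p * Phi ((v * q - m + ε) / σ)}).toReal = Phi q := by
    intro q
    have hset : {f : ℝ | p * Phi ((ε - f) / σ) ≤ p * Phi ((v * q - m + ε) / σ)}
        = Set.Ici (m - v * q) := by
      ext f
      simp only [Set.mem_setOf_eq, Set.mem_Ici, hcmp]
      constructor <;> intro h <;> linarith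
    rw [hset]
    exact gauss_Ici m v q hv
  refine ⟨h1, ?_, ?_⟩
  · have hset : {f : ℝ | p * Phi ((ε - f) / σ) ≤ p * Phi ((ε - m) / σ)} = Set.Ici m := by
      ext f
      simp only [Set.mem_setOf_eq, Set.mem_Ici, hcmp]
      constructor <;> intro h <;> linarith
    have := gauss_Ici m v 0 hv
    rw [show m - v * 0 = m by ring, Phi_zero] at this
    rw [hset, this]
  · have hV : (v ^ 2).toNNReal ≠ 0 := by
      simp [Real.toNNReal_eq_zero, not_le, pow_pos hv, hv.ne']
    have hset : {f : ℝ | p * Phi ((ε - m) / σ) ≤ p * Phi ((ε - f) / σ)} = Set.Iic m := by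
      ext f
      simp only [Set.mem_setOf_eq, Set.mem_Iic, hcmp]
      constructor <;> intro h <;> linarith
    rw [hset]
    set μ := gaussianReal m (v ^ 2).toNNReal with hμ
    have hIci : (μ (Set.Ici m)).toReal = 1 / 2 := by
      have := gauss_Ici m v 0 hv
      rw [show m - v * 0 = m by ring, Phi_zero] at this
      exact this
    have hcompl : μ (Set.Iio m) = 1 - μ (Set.Ici m) := by
      rw [← Set.compl_Ici, prob_compl_eq_one_sub measurableSet_Ici]
    have hIio : (μ (Set.Iio m)).toReal = 1 / 2 := by
      rw [hcompl, ENNReal.toReal_sub_of_le prob_le_one ENNReal.one_ne_top, ENNReal.toReal_one,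
        hIci]
      norm_num
    calc (1:ℝ) / 2 = (μ (Set.Iio m)).toReal := hIio.symm
      _ ≤ (μ (Set.Iic m)).toReal :=
        ENNReal.toReal_mono (measure_ne_top μ _) (measure_mono Set.Iio_subset_Iic_self)
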